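/- Let (M, Σ_M, μ_M) be a measure space, (N, d_N) a complete metric space, h : M → N strongly measurable, and p ∈ (1,∞). Let c : [a,b] → L^p_h(M,N) be a constant speed geodesic with respect to D_p, i.e., D_p(c(s), c(t)) = (|t−s|/(b−a)) · D_p(c(a), c(b)) for all s, t ∈ [a,b]. Then there exists a Borel measurable ĉ : [a,b]×M → N with separable range such that for every t ∈ [a,b], ĉ(t,·) is a representative of c(t) and, for μ_M-a.e. x ∈ M, the curve t ↦ ĉ(t,x) is a constant speed geodesic in N: d_N(ĉ(s,x), ĉ(t,x)) = (|t−s|/(b−a)) · d_N(ĉ(a,x), ĉ(b,x)) for all s, t ∈ [a,b]. -/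

import Mathlib

set_option linter.unusedSectionVars false

open MeasureTheory ENNReal Set Filter Topology TopologicalSpace

noncomputable section

namespace NLS

variable {α : Type*} [MeasurableSpace α] {N : Type*} [MetricSpace N]
  [MeasurableSpace N] [BorelSpace N]

/-- "Strongly measurable": Borel measurable with separable range. -/
def SM (f : α → N) : Prop :=
  Measurable f ∧ TopologicalSpace.IsSeparable (Set.range f)

theorem SM.aesm {f : α → N} (hf : SM f) (μ : Measure α) :
    AEStronglyMeasurable f μ :=
  (stronglyMeasurable_iff_measurable_separable.2 ⟨hf.1, hf.2⟩).aestronglyMeasurable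

/-- The `L^p` (extended) distance between two maps with values in a metric space;
for `p < ∞` it is `(∫ d(f x, g x)^p dμ)^{1/p}` and for `p = ∞` the essential supremum
of `x ↦ d(f x, g x)`. -/
def Dp (μ : Measure α) (p : ℝ≥0∞) (f g : α → N) : ℝ≥0∞ :=
  eLpNorm (fun x => dist (f x) (g x)) p μ

theorem Dp_self (μ : Measure α) (p : ℝ≥0∞) (f : α → N) : Dp μ p f f = 0 := by
  unfold Dp
  simp only [dist_self]
  exact eLpNorm_zero'

theorem Dp_comm (μ : Measure α) (p : ℝ≥0∞) (f g : α → N) : Dp μ p f g = Dp μ p g f := by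
  unfold Dp
  simp only [dist_comm]

theorem Dp_triangle {μ : Measure α} {p : ℝ≥0∞} (hp : 1 ≤ p) {f g k : α → N}
    (hf : AEStronglyMeasurable f μ) (hg : AEStronglyMeasurable g μ)
    (hk : AEStronglyMeasurable k μ) :
    Dp μ p f k ≤ Dp μ p f g + Dp μ p g k := by
  have h1 : Dp μ p f k ≤
      eLpNorm ((fun x => dist (f x) (g x)) + fun x => dist (g x) (k x)) p μ := by
    refine eLpNorm_mono fun x => ?_
    simp only [Pi.add_apply, Real.norm_eq_abs]
    rw [abs_of_nonneg dist_nonneg]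
    exact (dist_triangle (f x) (g x) (k x)).trans (le_abs_self _)
  exact h1.trans (eLpNorm_add_le (hf.dist hg) (hg.dist hk) hp)

/-- The nonlinear Lebesgue space `L^p_h(α, N)` with base map `h`, presented by
representatives: Borel measurable, separably valued maps at finite `D_p`-distance
from `h`.  Two representatives at `D_p`-distance `0` (equivalently, `μ`-a.e. equal)
represent the same element of the quotient nonlinear Lebesgue space; accordingly the
canonical structure below is a pseudometric space whose metric (separation) quotient is
the actual nonlinear Lebesgue space.  All topological and Borel-measurability notions for
the quotient correspond exactly to those of this pseudometric space. -/
def NLp (μ : Measure α) (h : α → N) (_hh : SM h) (p : ℝ≥0∞) : Type _ :=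
  {f : α → N // SM f ∧ Dp μ p f h ≠ ∞}

namespace NLp

variable {μ : Measure α} {h : α → N} {hh : SM h} {p : ℝ≥0∞}

def pem (μ : Measure α) (h : α → N) (hh : SM h) (p : ℝ≥0∞) (hp : 1 ≤ p) :
    PseudoEMetricSpace (NLp μ h hh p) where
  edist f g := Dp μ p f.1 g.1
  edist_self f := Dp_self μ p f.1
  edist_comm f g := Dp_comm μ p f.1 g.1
  edist_triangle f g k := Dp_triangle hp (f.2.1.aesm μ) (g.2.1.aesm μ) (k.2.1.aesm μ)

theorem dp_ne_top (hp : 1 ≤ p) (f g : NLp μ h hh p) : Dp μ p f.1 g.1 ≠ ∞ := by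
  have htri := Dp_triangle hp (f.2.1.aesm μ) (hh.aesm μ) (g.2.1.aesm μ)
  have h2 : Dp μ p h g.1 ≠ ∞ := by rw [Dp_comm]; exact g.2.2
  exact ne_top_of_le_ne_top (ENNReal.add_ne_top.2 ⟨f.2.2, h2⟩) htri

/-- The `D_p` pseudometric on the nonlinear Lebesgue space. -/
instance [hp : Fact (1 ≤ p)] : PseudoMetricSpace (NLp μ h hh p) :=
  @PseudoEMetricSpace.toPseudoMetricSpace _ (pem μ h hh p hp.out)
    (fun f g => dp_ne_top hp.out f g)

instance [Fact (1 ≤ p)] : MeasurableSpace (NLp μ h hh p) := borel _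
instance [Fact (1 ≤ p)] : BorelSpace (NLp μ h hh p) := ⟨rfl⟩

theorem edist_def [Fact (1 ≤ p)] (f g : NLp μ h hh p) :
    edist f g = Dp μ p f.1 g.1 := rfl

theorem dist_def [Fact (1 ≤ p)] (f g : NLp μ h hh p) :
    dist f g = (Dp μ p f.1 g.1).toReal := rfl

end NLp


section Aux

variable {α : Type*} [MeasurableSpace α] {N : Type*} [MetricSpace N]
  [MeasurableSpace N] [BorelSpace N] {μ : Measure α} {h : α → N} {hh : SM h}
  {p a b : ℝ}

lemma convex_eq_of_rpow {p : ℝ} (hp : 1 < p) {x y lam : ℝ} (hx : 0 ≤ x) (hy : 0 ≤ y)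
    (hl0 : 0 < lam) (hl1 : lam < 1)
    (heq : (lam * x + (1 - lam) * y) ^ p = lam * x ^ p + (1 - lam) * y ^ p) : x = y := by
  by_contra hne
  have := (strictConvexOn_rpow hp).2 (mem_Ici.2 hx) (mem_Ici.2 hy) hne
    hl0 (show (0:ℝ) < 1 - lam by linarith) (by ring)
  simp only [smul_eq_mul] at this
  exact absurd heq (ne_of_lt this)

lemma lint_rpow {p : ℝ} (hp : 0 < p) {φ : α → ℝ} (h0 : ∀ x, 0 ≤ φ x)
    {A : ℝ} (h : eLpNorm φ (ENNReal.ofReal p) μ = ENNReal.ofReal A) :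
    ∫⁻ x, ENNReal.ofReal (φ x ^ p) ∂μ = (ENNReal.ofReal A) ^ p := by
  rw [eLpNorm_eq_lintegral_rpow_enorm_toReal (by simp [hp, not_le.2 hp]) ENNReal.ofReal_ne_top] at h
  rw [ENNReal.toReal_ofReal hp.le] at h
  have e : ∀ x, (‖φ x‖ₑ) ^ p = ENNReal.ofReal (φ x ^ p) := by
    intro x
    rw [Real.enorm_eq_ofReal (h0 x), ENNReal.ofReal_rpow_of_nonneg (h0 x) hp.le]
  simp_rw [e] at h
  have := congrArg (· ^ p) h
  simpa [← ENNReal.rpow_natCast, one_div, ENNReal.rpow_inv_rpow hp.ne'] using this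

lemma lint_norm_div {p : ℝ} (hp : 0 < p) {φ : α → ℝ} (h0 : ∀ x, 0 ≤ φ x)
    {A : ℝ} (hA : 0 < A) (h : eLpNorm φ (ENNReal.ofReal p) μ = ENNReal.ofReal A) :
    ∫⁻ x, ENNReal.ofReal ((φ x / A) ^ p) ∂μ = 1 := by
  have e : ∀ x, ENNReal.ofReal ((φ x / A) ^ p)
      = ENNReal.ofReal (φ x ^ p) * (ENNReal.ofReal (A ^ p))⁻¹ := by
    intro x
    rw [Real.div_rpow (h0 x) hA.le, ENNReal.ofReal_div_of_pos (by positivity), div_eq_mul_inv]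
  simp_rw [e]
  rw [lintegral_mul_const' _ _ (by simp [ENNReal.inv_ne_top]; positivity), lint_rpow hp h0 h,
    ← ENNReal.ofReal_rpow_of_nonneg hA.le hp.le]
  exact ENNReal.mul_inv_cancel (by simp [ENNReal.rpow_eq_zero_iff, ENNReal.ofReal_eq_zero, hA.not_ge])
    (ENNReal.rpow_ne_top_of_nonneg hp.le ENNReal.ofReal_ne_top)

lemma key_ae {p : ℝ} (hp : 1 < p) {φ ψ χ : α → ℝ}
    (hφm : Measurable φ) (hψm : Measurable ψ) (hχm : Measurable χ)
    (hφ0 : ∀ x, 0 ≤ φ x) (hψ0 : ∀ x, 0 ≤ ψ x) (hχ0 : ∀ x, 0 ≤ χ x)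
    (htri : ∀ x, χ x ≤ φ x + ψ x)
    {A B : ℝ} (hA : 0 < A) (hB : 0 < B)
    (hφ : eLpNorm φ (ENNReal.ofReal p) μ = ENNReal.ofReal A)
    (hψ : eLpNorm ψ (ENNReal.ofReal p) μ = ENNReal.ofReal B)
    (hχ : eLpNorm χ (ENNReal.ofReal p) μ = ENNReal.ofReal (A + B)) :
    ∀ᵐ x ∂μ, φ x = (A / (A + B)) * χ x ∧ ψ x = (B / (A + B)) * χ x := by
  have hp0 : 0 < p := lt_trans one_pos hp
  have hAB : 0 < A + B := by linarith
  have mrp : ∀ {g : α → ℝ}, Measurable g → Measurable fun x => g x ^ p :=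
    fun hg => (Real.continuous_rpow_const (le_of_lt (lt_trans one_pos hp))).measurable.comp hg
  have hP1 : (1 : ℝ≥0∞) ≤ ENNReal.ofReal p := by
    rw [← ENNReal.ofReal_one]; exact ENNReal.ofReal_le_ofReal hp.le
  -- Step 1 : χ = φ + ψ a.e.
  have hsum_eq : eLpNorm (fun x => φ x + ψ x) (ENNReal.ofReal p) μ = ENNReal.ofReal (A + B) := by
    refine le_antisymm ?_ ?_
    · calc eLpNorm (fun x => φ x + ψ x) (ENNReal.ofReal p) μ
          ≤ eLpNorm φ (ENNReal.ofReal p) μ + eLpNorm ψ (ENNReal.ofReal p) μ :=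
            eLpNorm_add_le hφm.aestronglyMeasurable hψm.aestronglyMeasurable hP1
      _ = _ := by rw [hφ, hψ, ← ENNReal.ofReal_add hA.le hB.le]
    · rw [← hχ]
      refine eLpNorm_mono fun x => ?_
      rw [Real.norm_eq_abs, Real.norm_eq_abs, abs_of_nonneg (hχ0 x),
        abs_of_nonneg (add_nonneg (hφ0 x) (hψ0 x))]
      exact htri x
  have hIχ := lint_rpow (μ := μ) hp0 hχ0 hχ
  have hIσ := lint_rpow (μ := μ) hp0 (fun x => add_nonneg (hφ0 x) (hψ0 x)) hsum_eq
  have hfin : ∫⁻ x, ENNReal.ofReal (χ x ^ p) ∂μ ≠ ⊤ := by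
    rw [hIχ]; exact ENNReal.rpow_ne_top_of_nonneg hp0.le ENNReal.ofReal_ne_top
  have h1 : (fun x => ENNReal.ofReal (χ x ^ p))
      =ᵐ[μ] (fun x => ENNReal.ofReal ((φ x + ψ x) ^ p)) := by
    refine ae_eq_of_ae_le_of_lintegral_le (ae_of_all _ fun x => ?_) hfin
      ((mrp (hφm.add hψm)).ennreal_ofReal.aemeasurable) (le_of_eq (hIσ.trans hIχ.symm))
    exact ENNReal.ofReal_le_ofReal (Real.rpow_le_rpow (hχ0 x) (htri x) hp0.le)
  have hsum : ∀ᵐ x ∂μ, χ x = φ x + ψ x := by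
    filter_upwards [h1] with x hx
    have h2 := (ENNReal.ofReal_eq_ofReal_iff (Real.rpow_nonneg (hχ0 x) p)
      (Real.rpow_nonneg (add_nonneg (hφ0 x) (hψ0 x)) p)).1 hx
    have h3 := congrArg (· ^ p⁻¹) h2
    simpa [Real.rpow_rpow_inv (hχ0 x) hp0.ne',
      Real.rpow_rpow_inv (add_nonneg (hφ0 x) (hψ0 x)) hp0.ne'] using h3
  -- Step 2 : strict convexity
  set lam := A / (A + B) with hlam
  have hl0 : 0 < lam := div_pos hA hAB
  have hl1 : lam < 1 := (div_lt_one hAB).2 (by linarith)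
  have hcombo : ∀ u v : ℝ, lam * (u / A) + (1 - lam) * (v / B) = (u + v) / (A + B) := by
    intro u v; rw [hlam]; field_simp; ring
  have pc : ∀ x, ((φ x + ψ x) / (A + B)) ^ p
      ≤ lam * (φ x / A) ^ p + (1 - lam) * (ψ x / B) ^ p := by
    intro x
    rw [← hcombo (φ x) (ψ x)]
    have := (strictConvexOn_rpow hp).convexOn.2 (mem_Ici.2 (div_nonneg (hφ0 x) hA.le))
      (mem_Ici.2 (div_nonneg (hψ0 x) hB.le)) hl0.le (show (0:ℝ) ≤ 1 - lam by linarith) (by ring)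
    simpa using this
  have hu1 : ∫⁻ x, ENNReal.ofReal ((χ x / (A + B)) ^ p) ∂μ = 1 :=
    lint_norm_div hp0 hχ0 hAB hχ
  have hv1 : ∫⁻ x, ENNReal.ofReal (lam * (φ x / A) ^ p + (1 - lam) * (ψ x / B) ^ p) ∂μ = 1 := by
    have e : ∀ x, ENNReal.ofReal (lam * (φ x / A) ^ p + (1 - lam) * (ψ x / B) ^ p)
        = ENNReal.ofReal lam * ENNReal.ofReal ((φ x / A) ^ p)
          + ENNReal.ofReal (1 - lam) * ENNReal.ofReal ((ψ x / B) ^ p) := by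
      intro x
      rw [ENNReal.ofReal_add (mul_nonneg hl0.le (Real.rpow_nonneg (div_nonneg (hφ0 x) hA.le) p))
        (mul_nonneg (by linarith) (Real.rpow_nonneg (div_nonneg (hψ0 x) hB.le) p)),
        ENNReal.ofReal_mul hl0.le,
        ENNReal.ofReal_mul (by linarith)]
    simp_rw [e]
    rw [lintegral_add_left ((mrp (hφm.div_const A)).ennreal_ofReal.const_mul _),
      lintegral_const_mul' _ _ ENNReal.ofReal_ne_top,
      lintegral_const_mul' _ _ ENNReal.ofReal_ne_top,
      lint_norm_div hp0 hφ0 hA hφ, lint_norm_div hp0 hψ0 hB hψ, mul_one, mul_one,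
      ← ENNReal.ofReal_add hl0.le (by linarith), add_sub_cancel, ENNReal.ofReal_one]
  have hle : (fun x => ENNReal.ofReal ((χ x / (A + B)) ^ p))
      ≤ᵐ[μ] fun x => ENNReal.ofReal (lam * (φ x / A) ^ p + (1 - lam) * (ψ x / B) ^ p) := by
    filter_upwards [hsum] with x hx
    exact ENNReal.ofReal_le_ofReal (by rw [hx]; exact pc x)
  have heqv : (fun x => ENNReal.ofReal ((χ x / (A + B)) ^ p))
      =ᵐ[μ] fun x => ENNReal.ofReal (lam * (φ x / A) ^ p + (1 - lam) * (ψ x / B) ^ p) := by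
    refine ae_eq_of_ae_le_of_lintegral_le hle (by rw [hu1]; exact one_ne_top) ?_
      (by rw [hu1, hv1])
    exact (((mrp (hφm.div_const A)).const_mul _).add
      ((mrp (hψm.div_const B)).const_mul _)).ennreal_ofReal.aemeasurable
  filter_upwards [hsum, heqv] with x hx he
  have hreq : ((χ x / (A + B)) ^ p) = lam * (φ x / A) ^ p + (1 - lam) * (ψ x / B) ^ p :=
    (ENNReal.ofReal_eq_ofReal_iff (Real.rpow_nonneg (div_nonneg (hχ0 x) hAB.le) p)
      (add_nonneg (mul_nonneg hl0.le (Real.rpow_nonneg (div_nonneg (hφ0 x) hA.le) p))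
        (mul_nonneg (by linarith) (Real.rpow_nonneg (div_nonneg (hψ0 x) hB.le) p)))).1 he
  rw [hx, ← hcombo (φ x) (ψ x)] at hreq
  have hxy := convex_eq_of_rpow hp (div_nonneg (hφ0 x) hA.le) (div_nonneg (hψ0 x) hB.le)
    hl0 hl1 hreq
  have h2 : φ x * B = ψ x * A := (div_eq_div_iff hA.ne' hB.ne').1 hxy
  constructor
  · rw [hx, div_mul_eq_mul_div, eq_div_iff hAB.ne']; linear_combination h2
  · rw [hx, div_mul_eq_mul_div, eq_div_iff hAB.ne']; linear_combination -h2


section Curve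

variable [Fact (1 ≤ ENNReal.ofReal p)] {c : ℝ → NLp μ h hh (ENNReal.ofReal p)}

lemma sm_of (f : NLp μ h hh (ENNReal.ofReal p)) : StronglyMeasurable f.1 :=
  stronglyMeasurable_iff_measurable_separable.2 ⟨f.2.1.1, f.2.1.2⟩

lemma meas_dist (f g : NLp μ h hh (ENNReal.ofReal p)) :
    Measurable fun x => dist (f.1 x) (g.1 x) :=
  ((sm_of f).dist (sm_of g)).measurable

lemma elp_eq_ofReal_dist (hp : 1 < p) (s t : ℝ) :
    eLpNorm (fun x => dist ((c s).1 x) ((c t).1 x)) (ENNReal.ofReal p) μ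
      = ENNReal.ofReal (dist (c s) (c t)) := by
  have h1 : eLpNorm (fun x => dist ((c s).1 x) ((c t).1 x)) (ENNReal.ofReal p) μ
      = Dp μ (ENNReal.ofReal p) (c s).1 (c t).1 := rfl
  rw [h1, NLp.dist_def, ENNReal.ofReal_toReal (NLp.dp_ne_top Fact.out _ _)]

lemma triple_ae (hp : 1 < p) (hab : a < b)
    (hgeo : ∀ s ∈ Set.Icc a b, ∀ t ∈ Set.Icc a b,
      dist (c s) (c t) = (|t - s| / (b - a)) * dist (c a) (c b))
    {s u t : ℝ} (hs : s ∈ Set.Icc a b) (hu : u ∈ Set.Icc a b) (ht : t ∈ Set.Icc a b)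
    (hsu : s < u) (hut : u < t) (hD : 0 < dist (c a) (c b)) :
    ∀ᵐ x ∂μ, dist ((c s).1 x) ((c u).1 x)
        = ((u - s) / (t - s)) * dist ((c s).1 x) ((c t).1 x)
      ∧ dist ((c u).1 x) ((c t).1 x)
        = ((t - u) / (t - s)) * dist ((c s).1 x) ((c t).1 x) := by
  have hba : (0:ℝ) < b - a := sub_pos.2 hab
  set k : ℝ := dist (c a) (c b) / (b - a) with hk
  have hk0 : 0 < k := div_pos hD hba
  have hA : 0 < (u - s) * k := mul_pos (sub_pos.2 hsu) hk0
  have hB : 0 < (t - u) * k := mul_pos (sub_pos.2 hut) hk0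
  have hDsu : eLpNorm (fun x => dist ((c s).1 x) ((c u).1 x)) (ENNReal.ofReal p) μ
      = ENNReal.ofReal ((u - s) * k) := by
    rw [elp_eq_ofReal_dist hp, hgeo s hs u hu, abs_of_nonneg (by linarith), hk]
    ring_nf
  have hDut : eLpNorm (fun x => dist ((c u).1 x) ((c t).1 x)) (ENNReal.ofReal p) μ
      = ENNReal.ofReal ((t - u) * k) := by
    rw [elp_eq_ofReal_dist hp, hgeo u hu t ht, abs_of_nonneg (by linarith), hk]
    ring_nf
  have hDst : eLpNorm (fun x => dist ((c s).1 x) ((c t).1 x)) (ENNReal.ofReal p) μ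
      = ENNReal.ofReal ((u - s) * k + (t - u) * k) := by
    rw [elp_eq_ofReal_dist hp, hgeo s hs t ht, abs_of_nonneg (by linarith), hk]
    ring_nf
  have hkey := key_ae hp (meas_dist (c s) (c u)) (meas_dist (c u) (c t))
    (meas_dist (c s) (c t)) (fun x => dist_nonneg) (fun x => dist_nonneg)
    (fun x => dist_nonneg) (fun x => dist_triangle _ _ _) hA hB hDsu hDut hDst
  filter_upwards [hkey] with x hx
  have e1 : (u - s) * k / ((u - s) * k + (t - u) * k) = (u - s) / (t - s) := by
    rw [show (u - s) * k + (t - u) * k = (t - s) * k by ring, mul_div_mul_right _ _ hk0.ne']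
  have e2 : (t - u) * k / ((u - s) * k + (t - u) * k) = (t - u) / (t - s) := by
    rw [show (u - s) * k + (t - u) * k = (t - s) * k by ring, mul_div_mul_right _ _ hk0.ne']
  exact ⟨by rw [hx.1, e1], by rw [hx.2, e2]⟩

lemma dist_ae_zero (hp : 1 < p) {s t : ℝ} (hst : dist (c s) (c t) = 0) :
    ∀ᵐ x ∂μ, dist ((c s).1 x) ((c t).1 x) = 0 := by
  have h1 : eLpNorm (fun x => dist ((c s).1 x) ((c t).1 x)) (ENNReal.ofReal p) μ = 0 := by
    rw [elp_eq_ofReal_dist hp, hst, ENNReal.ofReal_zero]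
  have h2 := (eLpNorm_eq_zero_iff ((meas_dist (c s) (c t)).aestronglyMeasurable)
    (by simp [ENNReal.ofReal_eq_zero]; linarith)).1 h1
  filter_upwards [h2] with x hx using hx

lemma pair_ae (hp : 1 < p) (hab : a < b)
    (hgeo : ∀ s ∈ Set.Icc a b, ∀ t ∈ Set.Icc a b,
      dist (c s) (c t) = (|t - s| / (b - a)) * dist (c a) (c b))
    {s t : ℝ} (hs : s ∈ Set.Icc a b) (ht : t ∈ Set.Icc a b) (hst : s ≤ t) :
    ∀ᵐ x ∂μ, dist ((c s).1 x) ((c t).1 x)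
      = ((t - s) / (b - a)) * dist ((c a).1 x) ((c b).1 x) := by
  have hba : (0:ℝ) < b - a := sub_pos.2 hab
  have hamem : a ∈ Set.Icc a b := ⟨le_refl a, hab.le⟩
  have hbmem : b ∈ Set.Icc a b := ⟨hab.le, le_refl b⟩
  rcases eq_or_lt_of_le hst with rfl | hlt
  · refine Filter.Eventually.of_forall fun x => ?_
    simp
  rcases eq_or_lt_of_le (dist_nonneg : (0:ℝ) ≤ dist (c a) (c b)) with hD | hD
  · have h1 := dist_ae_zero (μ := μ) hp
      (show dist (c s) (c t) = 0 by rw [hgeo s hs t ht, ← hD]; ring)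
    have h2 := dist_ae_zero (μ := μ) hp
      (show dist (c a) (c b) = 0 from hD.symm)
    filter_upwards [h1, h2] with x hx1 hx2
    rw [hx1, hx2, mul_zero]
  -- dist (c a) (c b) > 0
  have base : ∀ t' ∈ Set.Icc a b, a < t' →
      ∀ᵐ x ∂μ, dist ((c a).1 x) ((c t').1 x)
        = ((t' - a) / (b - a)) * dist ((c a).1 x) ((c b).1 x) := by
    intro t' ht' hat'
    rcases eq_or_lt_of_le ht'.2 with rfl | htb
    · refine Filter.Eventually.of_forall fun x => ?_
      rw [div_self hba.ne', one_mul]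
    · exact (triple_ae hp hab hgeo hamem ht' hbmem hat' htb hD).mono fun x hx => hx.1
  rcases eq_or_lt_of_le hs.1 with rfl | has
  · exact base t ht hlt
  · have h1 := (triple_ae hp hab hgeo hamem hs ht has hlt hD)
    have h2 := base t ht (lt_trans has hlt)
    filter_upwards [h1, h2] with x hx1 hx2
    rw [hx1.2, hx2]
    have hta : t - a ≠ 0 := by intro hc; nlinarith [has, hlt]
    field_simp

end Curve

end Aux


/-- Dyadic grid points. -/
def dy (a b : ℝ) (nk : ℕ × ℤ) : ℝ := a + (b - a) / 2 ^ nk.1 * nk.2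

/-- Dyadic approximation from below. -/
def rd (a b : ℝ) (n : ℕ) (t : ℝ) : ℝ := dy a b (n, ⌊(t - a) / (b - a) * 2 ^ n⌋)

section Dyadic

variable {a b : ℝ} (hab : a < b)

lemma geom_tendsto : Tendsto (fun n : ℕ => (b - a) / 2 ^ n) atTop (𝓝 0) := by
  have h1 : Tendsto (fun n : ℕ => (b - a) * (2⁻¹ : ℝ) ^ n) atTop (𝓝 ((b - a) * 0)) :=
    (_root_.tendsto_pow_atTop_nhds_zero_of_lt_one (by norm_num) (by norm_num)).const_mul (b - a)
  simpa [div_eq_mul_inv, inv_pow] using h1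

include hab

lemma rd_le (n : ℕ) (t : ℝ) : rd a b n t ≤ t := by
  have hba : (0:ℝ) < b - a := sub_pos.2 hab
  have h1 : ((⌊(t - a) / (b - a) * 2 ^ n⌋ : ℤ) : ℝ) ≤ (t - a) / (b - a) * 2 ^ n :=
    Int.floor_le _
  have h2 : (b - a) / 2 ^ n * ((t - a) / (b - a) * 2 ^ n) = t - a := by
    field_simp
  have h3 : (b - a) / 2 ^ n * ((⌊(t - a) / (b - a) * 2 ^ n⌋ : ℤ) : ℝ) ≤ t - a :=
    le_trans (mul_le_mul_of_nonneg_left h1 (by positivity)) (le_of_eq h2)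
  simp only [rd, dy]
  linarith

lemma rd_sub (n : ℕ) (t : ℝ) : t - (b - a) / 2 ^ n ≤ rd a b n t := by
  have hba : (0:ℝ) < b - a := sub_pos.2 hab
  have h1 : (t - a) / (b - a) * 2 ^ n - 1 ≤ ((⌊(t - a) / (b - a) * 2 ^ n⌋ : ℤ) : ℝ) :=
    (Int.sub_one_lt_floor _).le
  have h2 : (b - a) / 2 ^ n * ((t - a) / (b - a) * 2 ^ n - 1)
      = t - a - (b - a) / 2 ^ n := by
    field_simp
  have h3 : t - a - (b - a) / 2 ^ n ≤ (b - a) / 2 ^ n * ((⌊(t - a) / (b - a) * 2 ^ n⌋ : ℤ) : ℝ) :=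
    le_trans (le_of_eq h2.symm) (mul_le_mul_of_nonneg_left h1 (by positivity))
  simp only [rd, dy]
  linarith

lemma rd_lb (n : ℕ) {t : ℝ} (hat : a ≤ t) : a ≤ rd a b n t := by
  have hba : (0:ℝ) < b - a := sub_pos.2 hab
  have h1 : (0:ℝ) ≤ ((⌊(t - a) / (b - a) * 2 ^ n⌋ : ℤ) : ℝ) := by
    have : (0:ℝ) ≤ (t - a) / (b - a) * 2 ^ n :=
      mul_nonneg (div_nonneg (by linarith) hba.le) (by positivity)
    exact_mod_cast Int.floor_nonneg.2 this
  have h2 : (0:ℝ) ≤ (b - a) / 2 ^ n * ((⌊(t - a) / (b - a) * 2 ^ n⌋ : ℤ) : ℝ) :=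
    mul_nonneg (by positivity) h1
  simp only [rd, dy]
  linarith

lemma rd_mem (n : ℕ) {t : ℝ} (ht : t ∈ Set.Icc a b) : rd a b n t ∈ Set.Icc a b :=
  ⟨rd_lb hab n ht.1, le_trans (rd_le hab n t) ht.2⟩

lemma rd_a (n : ℕ) : rd a b n a = a := by
  simp [rd, dy]

lemma rd_b (n : ℕ) : rd a b n b = b := by
  have hba : (0:ℝ) < b - a := sub_pos.2 hab
  have h1 : (b - a) / (b - a) * (2:ℝ) ^ n = ((2 ^ n : ℤ) : ℝ) := by
    rw [div_self hba.ne', one_mul]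
    push_cast
    ring
  simp only [rd, dy, h1, Int.floor_intCast]
  push_cast
  field_simp
  ring

lemma rd_tendsto {t : ℝ} : Tendsto (fun n => rd a b n t) atTop (𝓝 t) := by
  refine tendsto_of_tendsto_of_tendsto_of_le_of_le (g := fun n : ℕ => t - (b - a) / 2 ^ n)
    (h := fun _ : ℕ => t) ?_ tendsto_const_nhds (fun n => rd_sub hab n t) (fun n => rd_le hab n t)
  simpa using tendsto_const_nhds.sub (geom_tendsto (a := a) (b := b))

end Dyadic

/-- Absolutely continuous curves: `c ∈ AC^p([a,b], X)`. -/
def MemACp {X : Type*} [PseudoMetricSpace X] (p : ℝ≥0∞) (a b : ℝ) (c : ℝ → X) : Prop :=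
  ∃ m : ℝ → ℝ, MemLp m p (volume.restrict (Set.Icc a b)) ∧
    ∀ s t : ℝ, a ≤ s → s ≤ t → t ≤ b → dist (c s) (c t) ≤ ∫ r in s..t, m r

/-- The metric derivative of a curve at `t` (limit of difference quotients within `[a,b]`). -/
def mder {X : Type*} [PseudoMetricSpace X] (a b : ℝ) (c : ℝ → X) (t : ℝ) : ℝ :=
  limUnder (𝓝[Set.Icc a b \ {t}] t) fun s => dist (c s) (c t) / |s - t|

/-- Any constant speed geodesic `c : [a,b] → L^p_h(M,N)` (`N` complete, `1 < p < ∞`)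
admits a jointly Borel measurable, separably valued `cHat : [a,b] × M → N` such that
`x ↦ cHat(t,x)` represents `c t` for every `t ∈ [a,b]` and, for `μ`-a.e. `x`, the section
`t ↦ cHat(t,x)` is a constant speed geodesic in `N`. -/
theorem stmt13 {α : Type*} [MeasurableSpace α] {N : Type*} [MetricSpace N]
    [MeasurableSpace N] [BorelSpace N] [CompleteSpace N]
    (μ : Measure α) (h : α → N) (hh : SM h)
    (p a b : ℝ) (hp : 1 < p) (hab : a < b) [Fact (1 ≤ ENNReal.ofReal p)]
    (c : ℝ → NLp μ h hh (ENNReal.ofReal p))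
    (hgeo : ∀ s ∈ Set.Icc a b, ∀ t ∈ Set.Icc a b,
      dist (c s) (c t) = (|t - s| / (b - a)) * dist (c a) (c b)) :
    ∃ cHat : ℝ × α → N, Measurable cHat ∧ TopologicalSpace.IsSeparable (Set.range cHat) ∧
      (∀ t ∈ Set.Icc a b, (fun x => cHat (t, x)) =ᵐ[μ] (c t).1) ∧
      (∀ᵐ x ∂μ, ∀ s ∈ Set.Icc a b, ∀ t ∈ Set.Icc a b,
        dist (cHat (s, x)) (cHat (t, x))
          = (|t - s| / (b - a)) * dist (cHat (a, x)) (cHat (b, x))) := by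
  classical
  rcases isEmpty_or_nonempty N with hN | hN
  · have hαe : IsEmpty α := Function.isEmpty h
    refine ⟨fun pt => h pt.2, hh.1.comp measurable_snd,
      hh.2.mono (by rintro y ⟨pt, rfl⟩; exact ⟨pt.2, rfl⟩), fun t ht => ae_of_all _
      fun x => isEmptyElim x, ae_of_all _ fun x => isEmptyElim x⟩
  have hp0 : (0:ℝ) < p := lt_trans one_pos hp
  have hba : (0:ℝ) < b - a := sub_pos.2 hab
  have hamem : a ∈ Set.Icc a b := ⟨le_refl a, hab.le⟩
  have hbmem : b ∈ Set.Icc a b := ⟨hab.le, le_refl b⟩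
  -- the good set of points where all dyadic sections behave like geodesics
  set G : Set α := ⋂ (i : ℕ × ℤ) (j : ℕ × ℤ) (_ : dy a b i ∈ Set.Icc a b)
      (_ : dy a b j ∈ Set.Icc a b),
      {x | dist ((c (dy a b i)).1 x) ((c (dy a b j)).1 x)
        = |dy a b j - dy a b i| / (b - a) * dist ((c a).1 x) ((c b).1 x)} with hGdef
  have hGmem : ∀ x : α, x ∈ G ↔ ∀ i j : ℕ × ℤ, dy a b i ∈ Set.Icc a b →
      dy a b j ∈ Set.Icc a b →
      dist ((c (dy a b i)).1 x) ((c (dy a b j)).1 x)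
        = |dy a b j - dy a b i| / (b - a) * dist ((c a).1 x) ((c b).1 x) := by
    intro x
    simp only [hGdef, Set.mem_iInter, Set.mem_setOf_eq]
  have hGmeas : MeasurableSet G := by
    refine MeasurableSet.iInter fun i => MeasurableSet.iInter fun j =>
      MeasurableSet.iInter fun _ => MeasurableSet.iInter fun _ => ?_
    exact measurableSet_eq_fun (meas_dist (c (dy a b i)) (c (dy a b j)))
      ((meas_dist (c a) (c b)).const_mul _)
  have hGae : ∀ᵐ x ∂μ, x ∈ G := by
    have hall : ∀ i j : ℕ × ℤ, ∀ᵐ x ∂μ, dy a b i ∈ Set.Icc a b → dy a b j ∈ Set.Icc a b →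
        dist ((c (dy a b i)).1 x) ((c (dy a b j)).1 x)
          = |dy a b j - dy a b i| / (b - a) * dist ((c a).1 x) ((c b).1 x) := by
      intro i j
      by_cases hi : dy a b i ∈ Set.Icc a b
      · by_cases hj : dy a b j ∈ Set.Icc a b
        · rcases le_total (dy a b i) (dy a b j) with hij | hij
          · filter_upwards [pair_ae hp hab hgeo hi hj hij] with x hx _ _
            rw [hx, abs_of_nonneg (by linarith)]
          · filter_upwards [pair_ae hp hab hgeo hj hi hij] with x hx _ _
            rw [dist_comm, hx, abs_of_nonpos (by linarith)]
            ring_nf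
        · exact Filter.Eventually.of_forall fun x h1 h2 => absurd h2 hj
      · exact Filter.Eventually.of_forall fun x h1 => absurd h1 hi
    have h2 := ae_all_iff.2 fun i => ae_all_iff.2 (hall i)
    filter_upwards [h2] with x hx
    exact (hGmem x).2 hx
  -- the approximating sequence
  set gseq : ℕ → ℝ × α → N := fun n pt => (c (rd a b n pt.1)).1 pt.2 with hgseqdef
  have hgmeas : ∀ n, Measurable (gseq n) := by
    intro n
    have h1 : Measurable fun pt : ℝ × α => ((pt.2, ⌊(pt.1 - a) / (b - a) * 2 ^ n⌋) : α × ℤ) :=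
      measurable_snd.prodMk
        (Measurable.floor (((measurable_fst.sub_const a).div_const (b - a)).mul_const _))
    have h2 : Measurable fun w : α × ℤ => (c (dy a b (n, w.2))).1 w.1 :=
      measurable_from_prod_countable_left fun k => (c (dy a b (n, k))).2.1.1
    exact h2.comp h1
  set S : Set (ℝ × α) := (Set.Icc a b) ×ˢ G with hSdef
  have hSmeas : MeasurableSet S := measurableSet_Icc.prod hGmeas
  -- dyadic distances on the good set
  have hGkey : ∀ x ∈ G, ∀ n m : ℕ, ∀ s t : ℝ, s ∈ Set.Icc a b → t ∈ Set.Icc a b →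
      dist (gseq n (s, x)) (gseq m (t, x))
        = |rd a b m t - rd a b n s| / (b - a) * dist ((c a).1 x) ((c b).1 x) := by
    intro x hx n m s t hs ht
    exact (hGmem x).1 hx (n, ⌊(s - a) / (b - a) * 2 ^ n⌋) (m, ⌊(t - a) / (b - a) * 2 ^ m⌋)
      (rd_mem hab n hs) (rd_mem hab m ht)
  have hCauchy : ∀ pt ∈ S, CauchySeq fun n => gseq n pt := by
    rintro ⟨t, x⟩ ⟨ht, hxG⟩
    refine cauchySeq_of_le_tendsto_0
      (fun N => 2 * ((b - a) / 2 ^ N) / (b - a) * dist ((c a).1 x) ((c b).1 x)) ?_ ?_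
    · intro n m N hn hm
      rw [hGkey x hxG n m t t ht ht]
      have e1 : (b - a) / 2 ^ m ≤ (b - a) / 2 ^ N := by
        have h2 : (2:ℝ) ^ N ≤ 2 ^ m := pow_le_pow_right₀ one_le_two hm
        exact div_le_div_of_nonneg_left hba.le (by positivity) h2
      have e2 : (b - a) / 2 ^ n ≤ (b - a) / 2 ^ N := by
        have h2 : (2:ℝ) ^ N ≤ 2 ^ n := pow_le_pow_right₀ one_le_two hn
        exact div_le_div_of_nonneg_left hba.le (by positivity) h2
      have h1 : |rd a b m t - rd a b n t| ≤ 2 * ((b - a) / 2 ^ N) := by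
        have l1 := rd_le hab m t
        have l2 := rd_sub hab m t
        have l3 := rd_le hab n t
        have l4 := rd_sub hab n t
        rw [abs_sub_le_iff]
        constructor <;> linarith
      refine mul_le_mul_of_nonneg_right ?_ dist_nonneg
      exact div_le_div_of_nonneg_right h1 hba.le
    · have h3 : Tendsto (fun N : ℕ => 2 * ((b - a) / 2 ^ N) / (b - a)
          * dist ((c a).1 x) ((c b).1 x)) atTop
          (𝓝 (2 * (0:ℝ) / (b - a) * dist ((c a).1 x) ((c b).1 x))) :=
        ((geom_tendsto.const_mul 2).div_const (b - a)).mul_const _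
      simpa using h3
  set cseq : ℕ → ℝ × α → N := fun n pt => if pt ∈ S then gseq n pt else h pt.2 with hcseqdef
  have hconv : ∀ pt : ℝ × α, ∃ l, Tendsto (fun n => cseq n pt) atTop (𝓝 l) := by
    intro pt
    by_cases hpt : pt ∈ S
    · simp only [hcseqdef, hpt, if_true]
      exact cauchySeq_tendsto_of_complete (hCauchy pt hpt)
    · refine ⟨h pt.2, ?_⟩
      simp only [hcseqdef, hpt, if_false]
      exact tendsto_const_nhds
  set cHat : ℝ × α → N := fun pt => limUnder atTop fun n => cseq n pt with hcHatdef
  have htend : ∀ pt, Tendsto (fun n => cseq n pt) atTop (𝓝 (cHat pt)) :=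
    fun pt => tendsto_nhds_limUnder (hconv pt)
  have hcmeas : ∀ n, Measurable (cseq n) :=
    fun n => Measurable.ite hSmeas (hgmeas n) (hh.1.comp measurable_snd)
  have hmeasc : Measurable cHat :=
    measurable_of_tendsto_metrizable hcmeas (tendsto_pi_nhds.2 htend)
  have htendS : ∀ pt ∈ S, Tendsto (fun n => gseq n pt) atTop (𝓝 (cHat pt)) := by
    intro pt hpt
    have h1 := htend pt
    simp only [hcseqdef, hpt, if_true] at h1
    exact h1
  -- separability
  have hsep : IsSeparable (Set.range cHat) := by
    have hT : IsSeparable (Set.range h ∪ ⋃ i : ℕ × ℤ, Set.range (c (dy a b i)).1) :=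
      hh.2.union (isSeparable_iUnion.2 fun i => (c (dy a b i)).2.1.2)
    refine hT.closure.mono ?_
    rintro y ⟨pt, rfl⟩
    refine mem_closure_of_tendsto (htend pt) (Filter.Eventually.of_forall fun n => ?_)
    by_cases hpt : pt ∈ S
    · simp only [hcseqdef, hpt, if_true]
      exact Set.mem_union_right _
        (Set.mem_iUnion.2 ⟨(n, ⌊(pt.1 - a) / (b - a) * 2 ^ n⌋), ⟨pt.2, rfl⟩⟩)
    · simp only [hcseqdef, hpt, if_false]
      exact Set.mem_union_left _ ⟨pt.2, rfl⟩
  -- endpoint sections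
  have hsec : ∀ x ∈ G, ∀ t₀, t₀ ∈ Set.Icc a b → (∀ n, rd a b n t₀ = t₀) →
      cHat (t₀, x) = (c t₀).1 x := by
    intro x hx t₀ ht₀ hfix
    refine tendsto_nhds_unique (htendS (t₀, x) ⟨ht₀, hx⟩) ?_
    have h1 : (fun n => gseq n (t₀, x)) = fun _ => (c t₀).1 x :=
      funext fun n => by simp only [hgseqdef, hfix n]
    rw [h1]
    exact tendsto_const_nhds
  -- geodesic property of sections on the good set
  have hDG : ∀ x ∈ G, ∀ s ∈ Set.Icc a b, ∀ t ∈ Set.Icc a b,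
      dist (cHat (s, x)) (cHat (t, x))
        = |t - s| / (b - a) * dist ((c a).1 x) ((c b).1 x) := by
    intro x hx s hs t ht
    have h1 := (htendS (s, x) ⟨hs, hx⟩).dist (htendS (t, x) ⟨ht, hx⟩)
    have h2 : Tendsto (fun n => |rd a b n t - rd a b n s| / (b - a)
          * dist ((c a).1 x) ((c b).1 x)) atTop
        (𝓝 (|t - s| / (b - a) * dist ((c a).1 x) ((c b).1 x))) :=
      ((((rd_tendsto hab).sub (rd_tendsto hab)).abs.div_const (b - a)).mul_const _)
    have h3 : (fun n => dist (gseq n (s, x)) (gseq n (t, x)))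
        = fun n => |rd a b n t - rd a b n s| / (b - a) * dist ((c a).1 x) ((c b).1 x) :=
      funext fun n => hGkey x hx n n s t hs ht
    rw [h3] at h1
    exact tendsto_nhds_unique h1 h2
  refine ⟨cHat, hmeasc, hsep, ?_, ?_⟩
  · -- representatives
    intro t ht
    have hP0 : (ENNReal.ofReal p) ≠ 0 := by
      simp only [ne_eq, ENNReal.ofReal_eq_zero, not_le]
      linarith
    have hto : Tendsto (fun n => eLpNorm
        ((fun x => dist ((c (rd a b n t)).1 x) ((c t).1 x)) - (0 : α → ℝ))
        (ENNReal.ofReal p) μ) atTop (𝓝 0) := by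
      simp only [sub_zero]
      have he : ∀ n, eLpNorm (fun x => dist ((c (rd a b n t)).1 x) ((c t).1 x))
          (ENNReal.ofReal p) μ = ENNReal.ofReal (dist (c (rd a b n t)) (c t)) :=
        fun n => elp_eq_ofReal_dist hp _ _
      simp only [he]
      have hd : Tendsto (fun n => dist (c (rd a b n t)) (c t)) atTop (𝓝 0) := by
        have he2 : (fun n => dist (c (rd a b n t)) (c t))
            = fun n => |t - rd a b n t| / (b - a) * dist (c a) (c b) :=
          funext fun n => hgeo _ (rd_mem hab n ht) t ht
        rw [he2]
        have habs : Tendsto (fun n => |t - rd a b n t|) atTop (𝓝 0) := by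
          have := (tendsto_const_nhds (x := t) (f := atTop)).sub (rd_tendsto hab (t := t))
          simpa using this.abs
        simpa using (habs.div_const (b - a)).mul_const (dist (c a) (c b))
      have := ENNReal.tendsto_ofReal hd
      simpa using this
    have him := tendstoInMeasure_of_tendsto_eLpNorm hP0
      (fun n => (meas_dist (c (rd a b n t)) (c t)).aestronglyMeasurable)
      aestronglyMeasurable_const hto
    obtain ⟨ns, hns, hae⟩ := him.exists_seq_tendsto_ae
    filter_upwards [hGae, hae] with x hxG hxa
    have l1 : Tendsto (fun i => (c (rd a b (ns i) t)).1 x) atTop (𝓝 ((c t).1 x)) := by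
      rw [tendsto_iff_dist_tendsto_zero]
      exact hxa
    have l2 : Tendsto (fun i => gseq (ns i) (t, x)) atTop (𝓝 (cHat (t, x))) :=
      (htendS (t, x) ⟨ht, hxG⟩).comp hns.tendsto_atTop
    exact tendsto_nhds_unique l2 l1
  · -- a.e. geodesic sections
    filter_upwards [hGae] with x hxG s hs t ht
    rw [hDG x hxG s hs t ht, hsec x hxG a hamem (fun n => rd_a hab n),
      hsec x hxG b hbmem (fun n => rd_b hab n)]


end NLS
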